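/- Let d, m ≥ 1, let 0 < α₁ ≤ α₂ ≤ … ≤ α_m ≤ 1 be reals, and let f = (f₁, …, f_m) : [0,1]^d → ℝ^m satisfy |f_i(x) - f_i(y)| ≤ c ‖x - y‖^{α_i} for all x, y ∈ [0,1]^d, all 1 ≤ i ≤ m, and some constant c > 0. Then the Hausdorff dimension of the image f([0,1]^d) is at most min{ m, (d + Σ_{i=1}^j (α_j - α_i)) / α_j : 1 ≤ j ≤ m }. -/

import Mathlib

open MeasureTheory Filter ENNReal Topology

lemma sqrt_nat_le (m : ℕ) : Real.sqrt m ≤ m := by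
  rcases Nat.eq_zero_or_pos m with h | h
  · simp [h]
  · have h1 : (1:ℝ) ≤ m := by exact_mod_cast h
    nlinarith [Real.sq_sqrt (by positivity : (0:ℝ) ≤ (m:ℝ)), Real.sqrt_nonneg (m:ℝ)]

lemma diam_box {m : ℕ} (A : Fin m → ℝ) (ε : ℝ) (hε : 0 ≤ ε) :
    EMetric.diam {y : EuclideanSpace ℝ (Fin m) | ∀ i, y i ∈ Set.Icc (A i) (A i + ε)} ≤
      ENNReal.ofReal (m * ε) := by
  apply EMetric.diam_le
  intro y hy z hz
  rw [edist_dist]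
  apply ENNReal.ofReal_le_ofReal
  have h1 : dist y z ≤ Real.sqrt (∑ _i : Fin m, ε ^ 2) := by
    rw [EuclideanSpace.dist_eq]
    apply Real.sqrt_le_sqrt
    apply Finset.sum_le_sum
    intro i _
    have h2 : dist (y i) (z i) ≤ ε := by
      have := Real.dist_le_of_mem_Icc (hy i) (hz i)
      linarith
    have h0 : (0:ℝ) ≤ dist (y i) (z i) := dist_nonneg
    nlinarith
  refine h1.trans ?_
  rw [Finset.sum_const, Finset.card_univ, Fintype.card_fin, nsmul_eq_mul]
  rw [Real.sqrt_mul (by positivity), Real.sqrt_sq hε]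
  have := sqrt_nat_le m
  nlinarith [Real.sqrt_nonneg (m:ℝ)]

lemma grid_close (n : ℕ) (t : ℝ) (ht0 : 0 ≤ t) (ht1 : t ≤ 1) :
    ∃ u : Fin (n+1), (u:ℝ) * ((n:ℝ)+1)⁻¹ ≤ t ∧ t - (u:ℝ) * ((n:ℝ)+1)⁻¹ ≤ ((n:ℝ)+1)⁻¹ := by
  set N : ℝ := (n:ℝ)+1 with hN
  have hN0 : (0:ℝ) < N := by positivity
  refine ⟨⟨min ⌊t * N⌋₊ n, by omega⟩, ?_, ?_⟩
  · show ((min ⌊t * N⌋₊ n : ℕ) : ℝ) * N⁻¹ ≤ t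
    have h1 : ((min ⌊t * N⌋₊ n : ℕ) : ℝ) ≤ ⌊t * N⌋₊ := by exact_mod_cast min_le_left _ _
    have h2 : (⌊t * N⌋₊ : ℝ) ≤ t * N := Nat.floor_le (by positivity)
    rw [mul_inv_le_iff₀ hN0]
    linarith
  · show t - ((min ⌊t * N⌋₊ n : ℕ) : ℝ) * N⁻¹ ≤ N⁻¹
    have h3 : t * N ≤ ((min ⌊t * N⌋₊ n : ℕ) : ℝ) + 1 := by
      rcases le_or_gt ⌊t * N⌋₊ n with h | h
      · rw [min_eq_left h]
        exact le_of_lt (Nat.lt_floor_add_one _)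
      · rw [min_eq_right h.le]
        have : t * N ≤ N := by nlinarith
        rw [hN] at this ⊢
        linarith
    have h4 : (t - ((min ⌊t * N⌋₊ n : ℕ) : ℝ) * N⁻¹) * N ≤ 1 := by
      have : ((min ⌊t * N⌋₊ n : ℕ) : ℝ) * N⁻¹ * N = ((min ⌊t * N⌋₊ n : ℕ) : ℝ) := by
        field_simp
      nlinarith
    have h5 : (0:ℝ) < N⁻¹ := by positivity
    calc t - ↑(⌊t * N⌋₊ ⊓ n) * N⁻¹ = (t - ↑(⌊t * N⌋₊ ⊓ n) * N⁻¹) * N * N⁻¹ := by field_simp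
      _ ≤ 1 * N⁻¹ := by apply mul_le_mul_of_nonneg_right h4 h5.le
      _ = N⁻¹ := one_mul _

lemma subint (M : ℕ) (hM : 1 ≤ M) (ε u : ℝ) (hε : 0 < ε) (hu0 : 0 ≤ u) (huL : u ≤ M * ε) :
    ∃ l : ℕ, l < M ∧ (l:ℝ) * ε ≤ u ∧ u ≤ ((l:ℝ)+1) * ε := by
  refine ⟨min ⌊u/ε⌋₊ (M-1), by omega, ?_, ?_⟩
  · have h1 : ((min ⌊u/ε⌋₊ (M-1) : ℕ):ℝ) ≤ ⌊u/ε⌋₊ := by exact_mod_cast min_le_left _ _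
    have h2 : (⌊u/ε⌋₊:ℝ) ≤ u/ε := Nat.floor_le (by positivity)
    have h3 : u / ε * ε = u := by field_simp
    nlinarith
  · rcases le_or_gt ⌊u/ε⌋₊ (M-1) with h | h
    · rw [min_eq_left h]
      have h2 : u/ε < ⌊u/ε⌋₊ + 1 := Nat.lt_floor_add_one _
      rw [div_lt_iff₀ hε] at h2
      nlinarith
    · rw [min_eq_right h.le]
      have : ((M-1:ℕ):ℝ) + 1 = M := by
        push_cast [Nat.cast_sub hM]
        ring
      rw [this]
      linarith [mul_comm (M:ℝ) ε]

lemma rpow_helper (x : ℝ) (hx : 0 < x) (p q : ℝ) : x ^ (p - q) * (x⁻¹) ^ p = (x⁻¹) ^ q := by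
  rw [Real.inv_rpow hx.le, Real.inv_rpow hx.le, ← Real.rpow_neg hx.le, ← Real.rpow_neg hx.le,
    ← Real.rpow_add hx]
  ring_nf

set_option maxHeartbeats 1600000 in
lemma key (d m : ℕ) (hd : 1 ≤ d) (hm : 1 ≤ m)
    (α : Fin m → ℝ) (hαpos : ∀ i, 0 < α i) (hα1 : ∀ i, α i ≤ 1) (hαmono : Monotone α)
    (f : EuclideanSpace ℝ (Fin d) → EuclideanSpace ℝ (Fin m)) (c : ℝ) (hc : 0 < c)
    (K : Set (EuclideanSpace ℝ (Fin d))) (hK : K = {x | ∀ i, x i ∈ Set.Icc (0:ℝ) 1})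
    (hf : ∀ i, ∀ x ∈ K, ∀ y ∈ K, |f x i - f y i| ≤ c * ‖x - y‖ ^ (α i)) (j : Fin m) :
    dimH (f '' K) ≤ ENNReal.ofReal (((d : ℝ) + ∑ i ∈ Finset.Iic j, (α j - α i)) / α j) := by
  set a : ℝ := α j with ha_def
  have ha : 0 < a := hαpos j
  set S : ℝ := ∑ i ∈ Finset.Iic j, (a - α i) with hS_def
  have hS : 0 ≤ S := Finset.sum_nonneg fun i hi => by
    have : α i ≤ a := hαmono (Finset.mem_Iic.1 hi)
    linarith
  set s : ℝ := ((d : ℝ) + S) / a with hs_def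
  have hs0 : 0 ≤ s := by positivity
  have has : a * s = (d : ℝ) + S := by
    rw [hs_def]; field_simp
  set C : ℝ := 2 * c * d * m with hC_def
  have hC0 : 0 < C := by positivity
  -- basic quantities
  set N : ℕ → ℝ := fun n => (n:ℝ) + 1 with hN_def
  have hN0 : ∀ n, (0:ℝ) < N n := fun n => by positivity
  have hN1 : ∀ n, (1:ℝ) ≤ N n := fun n => by
    have : (0:ℝ) ≤ (n:ℝ) := Nat.cast_nonneg n
    simp only [hN_def]; linarith
  set δ : ℕ → ℝ := fun n => (N n)⁻¹ with hδ_def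
  have hδ0 : ∀ n, (0:ℝ) < δ n := fun n => by positivity
  have hNδ : ∀ n, N n * δ n = 1 := fun n => mul_inv_cancel₀ (hN0 n).ne'
  set ε : ℕ → ℝ := fun n => 2 * c * d * (δ n) ^ a with hε_def
  have hε0 : ∀ n, (0:ℝ) < ε n := fun n => by
    have := Real.rpow_pos_of_pos (hδ0 n) a
    positivity
  set R : ℕ → Fin m → ℝ := fun n i => c * d * (δ n) ^ (α i) with hR_def
  have hR0 : ∀ n i, (0:ℝ) < R n i := fun n i => by
    have := Real.rpow_pos_of_pos (hδ0 n) (α i)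
    positivity
  set M : ℕ → Fin m → ℕ := fun n i => ⌈(N n) ^ (a - α i)⌉₊ with hM_def
  have hM1 : ∀ n i, 1 ≤ M n i := fun n i =>
    Nat.one_le_ceil_iff.2 (Real.rpow_pos_of_pos (hN0 n) _)
  have hMε : ∀ n i, 2 * R n i ≤ (M n i : ℝ) * ε n := by
    intro n i
    have h1 : (N n) ^ (a - α i) ≤ (M n i : ℝ) := Nat.le_ceil _
    have h2 : (N n) ^ (a - α i) * (δ n) ^ a = (δ n) ^ (α i) :=
      rpow_helper (N n) (hN0 n) a (α i)
    have h3 : (0:ℝ) < (δ n) ^ a := Real.rpow_pos_of_pos (hδ0 n) a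
    have key := mul_le_mul_of_nonneg_right h1
      (le_of_lt (by positivity : (0:ℝ) < 2 * c * (d:ℝ) * (δ n) ^ a))
    calc 2 * R n i = (N n) ^ (a - α i) * (2 * c * (d:ℝ) * (δ n) ^ a) := by
          rw [hR_def]; dsimp only; rw [← h2]; ring
      _ ≤ (M n i : ℝ) * (2 * c * (d:ℝ) * (δ n) ^ a) := key
      _ = (M n i : ℝ) * ε n := by rw [hε_def]
  -- grid points
  let X : ∀ n, (Fin d → Fin (n+1)) → EuclideanSpace ℝ (Fin d) :=
    fun n k => WithLp.toLp 2 (fun b => (k b : ℝ) * δ n)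
  -- covering sets
  let T : ∀ n, ((Fin d → Fin (n+1)) × (∀ i, Fin (M n i))) → Set (EuclideanSpace ℝ (Fin m)) :=
    fun n p => {y | ∀ i, y i ∈ Set.Icc (f (X n p.1) i - R n i + (p.2 i : ℝ) * ε n)
      ((f (X n p.1) i - R n i + (p.2 i : ℝ) * ε n) + ε n)}
  let r : ℕ → ℝ≥0∞ := fun n => ENNReal.ofReal (m * ε n)
  have ht : ∀ n p, EMetric.diam (T n p) ≤ r n := fun n p =>
    diam_box (fun i => f (X n p.1) i - R n i + (p.2 i : ℝ) * ε n) (ε n) (hε0 n).le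
  have hr : Tendsto r atTop (𝓝 0) := by
    have h1 : Tendsto (fun n : ℕ => (N n) ^ (-a)) atTop (𝓝 0) :=
      (tendsto_rpow_neg_atTop ha).comp
        (tendsto_atTop_add_const_right atTop 1 tendsto_natCast_atTop_atTop)
    have h2 : ∀ n, (m:ℝ) * ε n = (2 * c * (d:ℝ) * m) * (N n) ^ (-a) := by
      intro n
      rw [hε_def]; dsimp only
      rw [hδ_def]; dsimp only
      rw [Real.inv_rpow (hN0 n).le, ← Real.rpow_neg (hN0 n).le]
      ring
    have h3 : Tendsto (fun n => (m:ℝ) * ε n) atTop (𝓝 0) := by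
      simp_rw [h2]
      simpa using h1.const_mul (2 * c * (d:ℝ) * m)
    have h4 := ENNReal.tendsto_ofReal (f := atTop) h3
    rw [ENNReal.ofReal_zero] at h4; exact h4
  have hst : ∀ n, f '' K ⊆ ⋃ p, T n p := by
    intro n
    rintro y ⟨x, hx, rfl⟩
    have hx' : ∀ b, x b ∈ Set.Icc (0:ℝ) 1 := by rw [hK] at hx; exact hx
    choose k hk1 hk2 using fun b => grid_close n (x b) (hx' b).1 (hx' b).2
    have hδeq : ((n:ℝ)+1)⁻¹ = δ n := rfl
    have hXapp : ∀ b, X n k b = (k b : ℝ) * δ n := fun b => rfl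
    have hXK : X n k ∈ K := by
      rw [hK]
      intro b
      rw [hXapp b]
      constructor
      · positivity
      · have h1 := hk1 b
        rw [hδeq] at h1
        exact h1.trans (hx' b).2
    have habs : ∀ b, |x b - X n k b| ≤ δ n := by
      intro b
      have h1 := hk1 b
      have h2 := hk2 b
      rw [hδeq] at h1 h2
      rw [hXapp b, abs_le]
      constructor
      · have := (hδ0 n).le
        linarith
      · linarith
    have hnorm : ‖x - X n k‖ ≤ Real.sqrt d * δ n := by
      rw [EuclideanSpace.norm_eq]
      have hb : ∀ b, ‖(x - X n k) b‖ ^ 2 ≤ (δ n) ^ 2 := by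
        intro b
        have h1 : (x - X n k) b = x b - X n k b := rfl
        rw [h1, Real.norm_eq_abs]
        have := habs b
        nlinarith [abs_nonneg (x b - X n k b)]
      calc Real.sqrt (∑ b, ‖(x - X n k) b‖ ^ 2)
          ≤ Real.sqrt (∑ _b : Fin d, (δ n) ^ 2) :=
            Real.sqrt_le_sqrt (Finset.sum_le_sum fun b _ => hb b)
        _ = Real.sqrt ((d:ℝ) * (δ n) ^ 2) := by
            rw [Finset.sum_const, Finset.card_univ, Fintype.card_fin, nsmul_eq_mul]
        _ = Real.sqrt d * δ n := by
            rw [Real.sqrt_mul (by positivity), Real.sqrt_sq (hδ0 n).le]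
    have hHold : ∀ i, |f x i - f (X n k) i| ≤ R n i := by
      intro i
      refine (hf i x hx (X n k) hXK).trans ?_
      have h1 : ‖x - X n k‖ ^ (α i) ≤ (Real.sqrt d * δ n) ^ (α i) :=
        Real.rpow_le_rpow (norm_nonneg _) hnorm (hαpos i).le
      have h2 : (Real.sqrt d * δ n) ^ (α i) = (Real.sqrt d) ^ (α i) * (δ n) ^ (α i) :=
        Real.mul_rpow (Real.sqrt_nonneg _) (hδ0 n).le
      have h3 : (Real.sqrt d) ^ (α i) ≤ (d:ℝ) := by
        have hd1 : (1:ℝ) ≤ Real.sqrt d := by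
          rw [show (1:ℝ) = Real.sqrt 1 by simp]
          exact Real.sqrt_le_sqrt (by exact_mod_cast hd)
        calc (Real.sqrt d) ^ (α i) ≤ (Real.sqrt d) ^ (1:ℝ) :=
              Real.rpow_le_rpow_of_exponent_le hd1 (hα1 i)
          _ = Real.sqrt d := Real.rpow_one _
          _ ≤ (d:ℝ) := sqrt_nat_le d
      have h4 : (0:ℝ) < (δ n) ^ (α i) := Real.rpow_pos_of_pos (hδ0 n) _
      rw [hR_def]; dsimp only
      calc c * ‖x - X n k‖ ^ (α i) ≤ c * ((Real.sqrt d) ^ (α i) * (δ n) ^ (α i)) := by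
            rw [← h2]; exact mul_le_mul_of_nonneg_left h1 hc.le
        _ ≤ c * ((d:ℝ) * (δ n) ^ (α i)) := by
            apply mul_le_mul_of_nonneg_left _ hc.le
            exact mul_le_mul_of_nonneg_right h3 h4.le
        _ = c * (d:ℝ) * (δ n) ^ (α i) := by ring
    have hl : ∀ i, ∃ l : ℕ, l < M n i ∧
        (l:ℝ) * ε n ≤ f x i - (f (X n k) i - R n i) ∧
        f x i - (f (X n k) i - R n i) ≤ ((l:ℝ)+1) * ε n := by
      intro i
      apply subint (M n i) (hM1 n i) (ε n) _ (hε0 n)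
      · have := hHold i
        have := abs_le.1 this
        linarith [this.2]
      · have h1 := hHold i
        have h2 := abs_le.1 h1
        have := hMε n i
        linarith [h2.1]
    choose l hl1 hl2 hl3 using hl
    refine Set.mem_iUnion.2 ⟨⟨k, fun i => ⟨l i, hl1 i⟩⟩, ?_⟩
    intro i
    constructor
    · have := hl2 i
      simp only []
      linarith
    · have := hl3 i
      simp only []
      linarith
  -- per-n real counting bound
  have hreal : ∀ n, (Fintype.card ((Fin d → Fin (n+1)) × (∀ i, Fin (M n i))) : ℝ) *
      ((m:ℝ) * ε n) ^ s ≤ 2^m * C^s := by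
    intro n
    have hcard : (Fintype.card ((Fin d → Fin (n+1)) × (∀ i, Fin (M n i))) : ℝ)
        = (N n) ^ (d:ℝ) * ∏ i, (M n i : ℝ) := by
      rw [Fintype.card_prod, Fintype.card_pi, Fintype.card_pi]
      simp only [Fintype.card_fin, Finset.prod_const, Finset.card_univ, Fintype.card_fin]
      push_cast
      rw [Real.rpow_natCast]
    have hMle : ∀ i, (M n i : ℝ) ≤ 2 * (N n) ^ (max (a - α i) 0) := by
      intro i
      have h1 : (M n i : ℝ) < (N n) ^ (a - α i) + 1 := by
        rw [hM_def]
        exact Nat.ceil_lt_add_one (Real.rpow_pos_of_pos (hN0 n) _).le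
      have h2 : (N n) ^ (a - α i) ≤ (N n) ^ (max (a - α i) 0) :=
        Real.rpow_le_rpow_of_exponent_le (hN1 n) (le_max_left _ _)
      have h3 : (1:ℝ) ≤ (N n) ^ (max (a - α i) 0) := by
        rw [show (1:ℝ) = (N n) ^ (0:ℝ) by rw [Real.rpow_zero]]
        exact Real.rpow_le_rpow_of_exponent_le (hN1 n) (le_max_right _ _)
      linarith
    have hβsum : (∑ i, max (a - α i) 0) = S := by
      rw [← Finset.sum_subset (Finset.subset_univ (Finset.Iic j))
        (fun i _ hi => max_eq_right (by
          have hj : a ≤ α i := hαmono (le_of_lt (by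
            simpa [Finset.mem_Iic] using hi))
          linarith))]
      rw [hS_def]
      exact Finset.sum_congr rfl fun i hi => max_eq_left (by
        have : α i ≤ a := hαmono (Finset.mem_Iic.1 hi)
        linarith)
    have hprod : (∏ i, (M n i : ℝ)) ≤ 2^m * (N n) ^ S := by
      calc ∏ i, (M n i : ℝ) ≤ ∏ i, (2 * (N n) ^ (max (a - α i) 0)) :=
            Finset.prod_le_prod (fun i _ => by positivity) (fun i _ => hMle i)
        _ = 2^m * ∏ i, (N n) ^ (max (a - α i) 0) := by
            rw [Finset.prod_mul_distrib, Finset.prod_const, Finset.card_univ, Fintype.card_fin]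
        _ = 2^m * (N n) ^ (∑ i, max (a - α i) 0) := by
            rw [Real.rpow_sum_of_pos (hN0 n)]
        _ = 2^m * (N n) ^ S := by rw [hβsum]
    have e1 : (m:ℝ) * ε n = C * (δ n) ^ a := by
      rw [hε_def, hC_def]; dsimp only; ring
    have e2 : ((m:ℝ) * ε n) ^ s = C ^ s * ((δ n) ^ (d:ℝ) * (δ n) ^ S) := by
      rw [e1, Real.mul_rpow hC0.le (Real.rpow_pos_of_pos (hδ0 n) a).le,
        ← Real.rpow_mul (hδ0 n).le, has, Real.rpow_add (hδ0 n)]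
    have hNd : (N n) ^ (d:ℝ) * (δ n) ^ (d:ℝ) = 1 := by
      rw [← Real.mul_rpow (hN0 n).le (hδ0 n).le, hNδ n, Real.one_rpow]
    have hNS : (N n) ^ S * (δ n) ^ S = 1 := by
      rw [← Real.mul_rpow (hN0 n).le (hδ0 n).le, hNδ n, Real.one_rpow]
    have hCs : (0:ℝ) < C ^ s := Real.rpow_pos_of_pos hC0 _
    have hδd : (0:ℝ) < (δ n) ^ (d:ℝ) := Real.rpow_pos_of_pos (hδ0 n) _
    have hδS : (0:ℝ) < (δ n) ^ S := Real.rpow_pos_of_pos (hδ0 n) _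
    have hNd0 : (0:ℝ) < (N n) ^ (d:ℝ) := Real.rpow_pos_of_pos (hN0 n) _
    calc (Fintype.card ((Fin d → Fin (n+1)) × (∀ i, Fin (M n i))) : ℝ) * ((m:ℝ) * ε n) ^ s
        = ((N n) ^ (d:ℝ) * ∏ i, (M n i : ℝ)) * (C ^ s * ((δ n) ^ (d:ℝ) * (δ n) ^ S)) := by
          rw [hcard, e2]
      _ ≤ ((N n) ^ (d:ℝ) * (2^m * (N n) ^ S)) * (C ^ s * ((δ n) ^ (d:ℝ) * (δ n) ^ S)) := by
          apply mul_le_mul_of_nonneg_right _ (by positivity)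
          exact mul_le_mul_of_nonneg_left hprod hNd0.le
      _ = (2^m * C^s) * (((N n) ^ (d:ℝ) * (δ n) ^ (d:ℝ)) * ((N n) ^ S * (δ n) ^ S)) := by
          ring
      _ = 2^m * C^s := by rw [hNd, hNS]; ring
  -- measure bound
  have hμ : μH[s] (f '' K) ≤ ENNReal.ofReal (2^m * C^s) := by
    refine le_trans (Measure.hausdorffMeasure_le_liminf_sum s (f '' K) r hr T
      (Eventually.of_forall ht) (Eventually.of_forall hst)) ?_
    have hb : ∀ n, (∑ p, EMetric.diam (T n p) ^ s) ≤ ENNReal.ofReal (2^m * C^s) := by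
      intro n
      have step1 : (∑ p, EMetric.diam (T n p) ^ s) ≤
          (Fintype.card ((Fin d → Fin (n+1)) × (∀ i, Fin (M n i))) : ℝ≥0∞) * (r n) ^ s := by
        refine le_trans (Finset.sum_le_sum fun p _ => ENNReal.rpow_le_rpow (ht n p) hs0) ?_
        rw [Finset.sum_const, nsmul_eq_mul, Finset.card_univ]
      have step2 : (Fintype.card ((Fin d → Fin (n+1)) × (∀ i, Fin (M n i))) : ℝ≥0∞) * (r n) ^ s
          = ENNReal.ofReal ((Fintype.card ((Fin d → Fin (n+1)) × (∀ i, Fin (M n i))) : ℝ) *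
            ((m:ℝ) * ε n) ^ s) := by
        have : (r n) ^ s = ENNReal.ofReal (((m:ℝ) * ε n) ^ s) :=
          ENNReal.ofReal_rpow_of_nonneg (by positivity) hs0
        rw [this, ← ENNReal.ofReal_natCast, ← ENNReal.ofReal_mul (Nat.cast_nonneg _)]
      rw [step2] at step1
      exact step1.trans (ENNReal.ofReal_le_ofReal (hreal n))
    refine le_trans (Filter.liminf_le_liminf (Eventually.of_forall hb)) ?_
    rw [Filter.liminf_const]
  have hne : μH[s] (f '' K) ≠ ⊤ := (lt_of_le_of_lt hμ ENNReal.ofReal_lt_top).ne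
  have hne' : μH[((s.toNNReal : ℝ))] (f '' K) ≠ ⊤ := by
    rw [Real.coe_toNNReal s hs0]; exact hne
  have hfinal : dimH (f '' K) ≤ ((s.toNNReal : NNReal) : ℝ≥0∞) :=
    dimH_le_of_hausdorffMeasure_ne_top hne'
  have hco : ENNReal.ofReal s = ((s.toNNReal : NNReal) : ℝ≥0∞) := rfl
  rw [hco]
  exact hfinal

theorem stmt11 (d m : ℕ) (hd : 1 ≤ d) (hm : 1 ≤ m) [NeZero m]
    (α : Fin m → ℝ) (hαpos : ∀ i, 0 < α i) (hα1 : ∀ i, α i ≤ 1)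
    (hαmono : Monotone α)
    (f : EuclideanSpace ℝ (Fin d) → EuclideanSpace ℝ (Fin m)) (c : ℝ) (hc : 0 < c)
    (K : Set (EuclideanSpace ℝ (Fin d)))
    (hK : K = {x | ∀ i, x i ∈ Set.Icc (0:ℝ) 1})
    (hf : ∀ i, ∀ x ∈ K, ∀ y ∈ K, |f x i - f y i| ≤ c * ‖x - y‖ ^ (α i)) :
    dimH (f '' K) ≤ ENNReal.ofReal (min (m : ℝ)
      (Finset.univ.inf' Finset.univ_nonempty (fun j : Fin m =>
        ((d : ℝ) + ∑ i ∈ Finset.Iic j, (α j - α i)) / α j))) := by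
  have h1 : dimH (f '' K) ≤ ENNReal.ofReal m := by
    have h2 : dimH (f '' K) ≤ dimH (Set.univ : Set (EuclideanSpace ℝ (Fin m))) :=
      dimH_mono (Set.subset_univ _)
    rw [Real.dimH_univ_eq_finrank, finrank_euclideanSpace_fin] at h2
    rwa [ENNReal.ofReal_natCast]
  obtain ⟨j₀, -, hj₀⟩ := Finset.exists_mem_eq_inf' (Finset.univ_nonempty) (fun j : Fin m =>
    ((d : ℝ) + ∑ i ∈ Finset.Iic j, (α j - α i)) / α j)
  have h2 : dimH (f '' K) ≤ ENNReal.ofReal (Finset.univ.inf' Finset.univ_nonempty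
      (fun j : Fin m => ((d : ℝ) + ∑ i ∈ Finset.Iic j, (α j - α i)) / α j)) := by
    rw [hj₀]
    exact key d m hd hm α hαpos hα1 hαmono f c hc K hK hf j₀
  rcases min_cases ((m:ℝ)) (Finset.univ.inf' Finset.univ_nonempty (fun j : Fin m =>
      ((d : ℝ) + ∑ i ∈ Finset.Iic j, (α j - α i)) / α j)) with ⟨h,-⟩|⟨h,-⟩ <;> rw [h]
  exacts [h1, h2]
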